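/- Let γ > 0 and ν > 0, and for x > 0 define λ_{γ,ν}(x) = −ln[1 − I(x²/(x² + γ²ν); 1/2, ν/2)] / x, where I denotes the regularized incomplete beta function. Then λ_{γ,ν}(x) tends to λ₀ = 2/(γ·ν^{1/2}·B(1/2, ν/2)) as x → 0⁺, where B denotes the Beta function. -/

import Mathlib

open MeasureTheory Set Filter

/-- The Beta function `B(a, b) = ∫_0^1 u^{a-1} (1-u)^{b-1} du`. -/
noncomputable def betaFn (a b : ℝ) : ℝ :=
  ∫ u in Ioo (0:ℝ) 1, u ^ (a - 1) * (1 - u) ^ (b - 1)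

/-- The regularized incomplete beta function `I(z; a, b)`. -/
noncomputable def regIncBeta (a b z : ℝ) : ℝ :=
  (∫ u in Ioo (0:ℝ) z, u ^ (a - 1) * (1 - u) ^ (b - 1)) / betaFn a b


lemma int_rpow_Ioo (z : ℝ) (hz : 0 ≤ z) :
    ∫ u in Ioo (0:ℝ) z, u ^ ((1:ℝ)/2 - 1) = 2 * z ^ ((1:ℝ)/2) := by
  rw [← MeasureTheory.integral_Ioc_eq_integral_Ioo, ← intervalIntegral.integral_of_le hz,
    integral_rpow (Or.inl (by norm_num))]
  rw [Real.zero_rpow (by norm_num)]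
  norm_num
  ring


lemma ptwise_bound {c z u : ℝ} (hz : z ≤ 1/2) (hu0 : 0 < u) (huz : u ≤ z) :
    min 1 ((1-z)^c) ≤ (1-u)^c ∧ (1-u)^c ≤ max 1 ((1-z)^c) := by
  have h1 : (0:ℝ) < 1 - z := by linarith
  have h2 : 1 - z ≤ 1 - u := by linarith
  have h3 : 1 - u ≤ 1 := by linarith
  have h4 : (0:ℝ) < 1 - u := by linarith
  rcases le_or_gt 0 c with hc | hc
  · refine ⟨le_trans (min_le_right _ _) (Real.rpow_le_rpow h1.le h2 hc), ?_⟩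
    refine le_trans ?_ (le_max_left _ _)
    calc (1-u)^c ≤ (1:ℝ)^c := Real.rpow_le_rpow h4.le h3 hc
    _ = 1 := Real.one_rpow c
  · constructor
    · refine le_trans (min_le_left _ _) ?_
      calc (1:ℝ) = (1:ℝ)^c := (Real.one_rpow c).symm
      _ ≤ (1-u)^c := Real.rpow_le_rpow_of_nonpos h4 h3 hc.le
    · exact le_trans (Real.rpow_le_rpow_of_nonpos h1 h2 hc.le) (le_max_right _ _)

lemma f_contOn {c : ℝ} {s : Set ℝ} (hs : ∀ u ∈ s, 0 < u ∧ u < 1) :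
    ContinuousOn (fun u : ℝ => u ^ ((1:ℝ)/2 - 1) * (1-u)^c) s := by
  refine ContinuousOn.mul ?_ ?_
  · intro u hu
    exact (Real.continuousAt_rpow_const u _ (Or.inl (hs u hu).1.ne')).continuousWithinAt
  · intro u hu
    exact ((Real.continuousAt_rpow_const (1-u) c
      (Or.inl (sub_ne_zero_of_ne (ne_of_gt (hs u hu).2)))).comp
      (by fun_prop : Continuous fun u : ℝ => 1 - u).continuousAt).continuousWithinAt

lemma f_integrableOn {c z : ℝ} (hz0 : 0 ≤ z) (hz : z ≤ 1/2) :
    IntegrableOn (fun u : ℝ => u ^ ((1:ℝ)/2 - 1) * (1-u)^c) (Ioc 0 z) := by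
  have hmeas : AEStronglyMeasurable (fun u : ℝ => u ^ ((1:ℝ)/2 - 1) * (1-u)^c)
      (volume.restrict (Ioc 0 z)) :=
    (f_contOn (fun u hu => ⟨hu.1, by have := hu.2; linarith⟩)).aestronglyMeasurable
      measurableSet_Ioc
  have hg : IntegrableOn (fun u : ℝ => max 1 ((1-z)^c) * u ^ ((1:ℝ)/2 - 1)) (Ioc 0 z) := by
    refine Integrable.const_mul ?_ _
    have := (intervalIntegral.intervalIntegrable_rpow' (a := 0) (b := z)
      (by norm_num : (-1:ℝ) < 1/2 - 1))
    rwa [intervalIntegrable_iff_integrableOn_Ioc_of_le hz0] at this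
  refine hg.mono' hmeas ?_
  filter_upwards [ae_restrict_mem measurableSet_Ioc] with u hu
  have h1 := (ptwise_bound (c := c) hz hu.1 hu.2).2
  have h2 : 0 ≤ (1-u:ℝ)^c := Real.rpow_nonneg (by have := hu.2; have := hu.1; linarith) c
  have h3 : 0 ≤ u ^ ((1:ℝ)/2 - 1) := Real.rpow_nonneg hu.1.le _
  rw [Real.norm_eq_abs, abs_of_nonneg (mul_nonneg h3 h2)]
  calc u ^ ((1:ℝ)/2 - 1) * (1-u)^c ≤ u ^ ((1:ℝ)/2 - 1) * max 1 ((1-z)^c) :=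
        mul_le_mul_of_nonneg_left h1 h3
  _ = _ := mul_comm _ _



lemma rpow_integrableOn_Ioo {z : ℝ} (hz0 : 0 ≤ z) :
    IntegrableOn (fun u : ℝ => u ^ ((1:ℝ)/2 - 1)) (Ioo 0 z) := by
  have := (intervalIntegral.intervalIntegrable_rpow' (a := 0) (b := z)
    (by norm_num : (-1:ℝ) < 1/2 - 1))
  rw [intervalIntegrable_iff_integrableOn_Ioc_of_le hz0] at this
  exact this.mono_set Ioo_subset_Ioc_self

lemma G_bounds {c z : ℝ} (hz0 : 0 ≤ z) (hz : z ≤ 1/2) :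
    2 * z ^ ((1:ℝ)/2) * min 1 ((1-z)^c) ≤ (∫ u in Ioo (0:ℝ) z, u ^ ((1:ℝ)/2-1) * (1-u)^c)
    ∧ (∫ u in Ioo (0:ℝ) z, u ^ ((1:ℝ)/2-1) * (1-u)^c) ≤ 2 * z ^ ((1:ℝ)/2) * max 1 ((1-z)^c) := by
  have hfi : IntegrableOn (fun u : ℝ => u ^ ((1:ℝ)/2-1) * (1-u)^c) (Ioo 0 z) :=
    (f_integrableOn hz0 hz).mono_set Ioo_subset_Ioc_self
  have hlo : IntegrableOn (fun u : ℝ => min 1 ((1-z)^c) * u ^ ((1:ℝ)/2-1)) (Ioo 0 z) :=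
    (rpow_integrableOn_Ioo hz0).const_mul _
  have hhi : IntegrableOn (fun u : ℝ => max 1 ((1-z)^c) * u ^ ((1:ℝ)/2-1)) (Ioo 0 z) :=
    (rpow_integrableOn_Ioo hz0).const_mul _
  have hptl : ∀ u ∈ Ioo (0:ℝ) z, min 1 ((1-z)^c) * u ^ ((1:ℝ)/2-1) ≤ u ^ ((1:ℝ)/2-1) * (1-u)^c := by
    intro u hu
    rw [mul_comm]
    exact mul_le_mul_of_nonneg_left (ptwise_bound hz hu.1 hu.2.le).1
      (Real.rpow_nonneg hu.1.le _)
  have hpth : ∀ u ∈ Ioo (0:ℝ) z, u ^ ((1:ℝ)/2-1) * (1-u)^c ≤ max 1 ((1-z)^c) * u ^ ((1:ℝ)/2-1) := by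
    intro u hu
    rw [mul_comm (max _ _)]
    exact mul_le_mul_of_nonneg_left (ptwise_bound hz hu.1 hu.2.le).2
      (Real.rpow_nonneg hu.1.le _)
  constructor
  · calc 2 * z ^ ((1:ℝ)/2) * min 1 ((1-z)^c)
        = ∫ u in Ioo (0:ℝ) z, min 1 ((1-z)^c) * u ^ ((1:ℝ)/2-1) := by
          rw [integral_const_mul, int_rpow_Ioo z hz0]; ring
    _ ≤ _ := setIntegral_mono_on hlo hfi measurableSet_Ioo hptl
  · calc (∫ u in Ioo (0:ℝ) z, u ^ ((1:ℝ)/2-1) * (1-u)^c)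
        ≤ ∫ u in Ioo (0:ℝ) z, max 1 ((1-z)^c) * u ^ ((1:ℝ)/2-1) :=
          setIntegral_mono_on hfi hhi measurableSet_Ioo hpth
    _ = _ := by rw [integral_const_mul, int_rpow_Ioo z hz0]; ring



lemma f_integrableOn_Ioo01 {c : ℝ} (hc : -1 < c) :
    IntegrableOn (fun u : ℝ => u ^ ((1:ℝ)/2 - 1) * (1-u)^c) (Ioo 0 1) := by
  have h1 : IntegrableOn (fun u : ℝ => u ^ ((1:ℝ)/2 - 1) * (1-u)^c) (Ioc 0 (1/2)) :=
    f_integrableOn (by norm_num) le_rfl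
  have hbase : IntegrableOn (fun u : ℝ => (1-u)^c) (Ioc (1/2) 1) := by
    have h := ((intervalIntegral.intervalIntegrable_rpow' (a := 0) (b := 1/2) hc).comp_sub_left
      1).symm
    norm_num at h
    rwa [intervalIntegrable_iff_integrableOn_Ioc_of_le (by norm_num : (1:ℝ)/2 ≤ 1)] at h
  have h2 : IntegrableOn (fun u : ℝ => u ^ ((1:ℝ)/2 - 1) * (1-u)^c) (Ioo (1/2) 1) := by
    have hmeas : AEStronglyMeasurable (fun u : ℝ => u ^ ((1:ℝ)/2 - 1) * (1-u)^c)
        (volume.restrict (Ioo (1/2) 1)) :=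
      (f_contOn (fun u hu => ⟨by linarith [hu.1], hu.2⟩)).aestronglyMeasurable measurableSet_Ioo
    refine Integrable.mono' ((hbase.mono_set Ioo_subset_Ioc_self).const_mul
      (((1:ℝ)/2) ^ ((1:ℝ)/2 - 1))) hmeas ?_
    filter_upwards [ae_restrict_mem measurableSet_Ioo] with u hu
    have hu0 : (0:ℝ) < u := by linarith [hu.1]
    have h1u : (0:ℝ) < 1 - u := by linarith [hu.2]
    have hb : 0 ≤ (1-u:ℝ)^c := Real.rpow_nonneg h1u.le c
    rw [Real.norm_eq_abs, abs_of_nonneg (mul_nonneg (Real.rpow_nonneg hu0.le _) hb)]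
    exact mul_le_mul_of_nonneg_right
      (Real.rpow_le_rpow_of_nonpos (by norm_num) hu.1.le (by norm_num)) hb
  refine (h1.union h2).mono_set ?_
  intro x hx
  rcases le_or_gt x (1/2) with h | h
  · exact Or.inl ⟨hx.1, h⟩
  · exact Or.inr ⟨h, hx.2⟩

lemma betaFn_pos {b : ℝ} (hb : 0 < b) : 0 < betaFn (1/2) b := by
  have hc : (-1:ℝ) < b - 1 := by linarith
  have hint := f_integrableOn_Ioo01 (c := b - 1) hc
  have key := (G_bounds (c := b - 1) (z := 1/2) (by norm_num) le_rfl).1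
  have hnonneg : 0 ≤ᵐ[volume.restrict (Ioo (0:ℝ) 1)]
      fun u : ℝ => u ^ ((1:ℝ)/2 - 1) * (1-u)^(b-1) := by
    filter_upwards [ae_restrict_mem measurableSet_Ioo] with u hu
    exact mul_nonneg (Real.rpow_nonneg hu.1.le _)
      (Real.rpow_nonneg (by linarith [hu.2]) _)
  have hmono : (∫ u in Ioo (0:ℝ) (1/2), u ^ ((1:ℝ)/2-1) * (1-u)^(b-1))
      ≤ ∫ u in Ioo (0:ℝ) 1, u ^ ((1:ℝ)/2-1) * (1-u)^(b-1) :=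
    setIntegral_mono_set hint hnonneg
      (HasSubset.Subset.eventuallyLE (Ioo_subset_Ioo_right (by norm_num)))
  have hpos : 0 < 2 * ((1:ℝ)/2) ^ ((1:ℝ)/2) * min 1 ((1 - (1:ℝ)/2)^(b-1)) := by
    have h1 : (0:ℝ) < ((1:ℝ)/2) ^ ((1:ℝ)/2) := Real.rpow_pos_of_pos (by norm_num) _
    have h2 : (0:ℝ) < (1 - (1:ℝ)/2)^(b-1) := Real.rpow_pos_of_pos (by norm_num) _
    positivity
  have : 0 < ∫ u in Ioo (0:ℝ) 1, u ^ ((1:ℝ)/2-1) * (1-u)^(b-1) :=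
    lt_of_lt_of_le hpos (le_trans key hmono)
  simpa [betaFn] using this






/-- As `x → 0⁺`, the tail-matching rate `λ_{γ,ν}(x)` tends to
`λ₀ = 2/(γ·√ν·B(1/2, ν/2))`. -/
theorem lambda_tendsto_at_zero (γ ν : ℝ) (hγ : 0 < γ) (hν : 0 < ν) :
    Tendsto
      (fun x : ℝ =>
        - Real.log (1 - regIncBeta (1/2) (ν/2) (x^2 / (x^2 + γ^2 * ν))) / x)
      (nhdsWithin 0 (Ioi 0))
      (nhds (2 / (γ * ν ^ ((1:ℝ)/2) * betaFn (1/2) (ν/2)))) := by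
  set c : ℝ := ν/2 - 1 with hc_def
  set B : ℝ := betaFn (1/2) (ν/2) with hB_def
  have hB : 0 < B := betaFn_pos (by positivity)
  set z : ℝ → ℝ := fun x => x^2 / (x^2 + γ^2 * ν) with hz_def
  set G : ℝ → ℝ := fun x => ∫ u in Ioo (0:ℝ) (z x), u ^ ((1:ℝ)/2-1) * (1-u)^c with hG_def
  have hd : ∀ x : ℝ, 0 < x^2 + γ^2 * ν := fun x => by positivity
  have hz0 : ∀ x : ℝ, 0 ≤ z x := fun x => div_nonneg (sq_nonneg x) (hd x).le
  have hzpos : ∀ x : ℝ, 0 < x → 0 < z x := fun x hx => div_pos (by positivity) (hd x)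
  have hsq : ∀ t : ℝ, 0 ≤ t → (t^2) ^ ((1:ℝ)/2) = t := by
    intro t ht
    rw [← Real.rpow_natCast t 2, ← Real.rpow_mul ht]
    norm_num
  have hK : γ * ν ^ ((1:ℝ)/2) > 0 := by
    have := Real.rpow_pos_of_pos hν ((1:ℝ)/2); positivity
  -- z tends to 0
  have hztendsto : Tendsto z (nhdsWithin 0 (Ioi 0)) (nhds 0) := by
    have hcont : ContinuousAt z 0 := by
      rw [hz_def]
      exact ContinuousAt.div (by fun_prop) (by fun_prop) (ne_of_gt (hd 0))
    have h0 : z 0 = 0 := by simp [hz_def]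
    simpa [h0] using hcont.continuousWithinAt.tendsto
  -- eventually z x ≤ 1/2
  have hev : ∀ᶠ x in nhdsWithin (0:ℝ) (Ioi 0), 0 < x ∧ z x ≤ 1/2 := by
    have h2 : Tendsto (fun x : ℝ => x^2) (nhdsWithin 0 (Ioi 0)) (nhds 0) := by
      have : ContinuousAt (fun x : ℝ => x^2) 0 := by fun_prop
      simpa using this.continuousWithinAt.tendsto
    filter_upwards [self_mem_nhdsWithin, h2.eventually_le_const (by positivity : (0:ℝ) < γ^2*ν)]
      with x hx hx2
    refine ⟨hx, ?_⟩
    rw [hz_def, div_le_iff₀ (hd x)]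
    linarith
  -- sqrt identity
  have hzsqrt : ∀ x : ℝ, 0 < x → (z x) ^ ((1:ℝ)/2) = x / (x^2 + γ^2*ν) ^ ((1:ℝ)/2) := by
    intro x hx
    rw [hz_def]
    rw [Real.div_rpow (sq_nonneg x) (hd x).le, hsq x hx.le]
  have hspos : ∀ x : ℝ, 0 < (x^2 + γ^2*ν) ^ ((1:ℝ)/2) := fun x =>
    Real.rpow_pos_of_pos (hd x) _
  -- limit of s and of min/max factors
  have hstendsto : Tendsto (fun x : ℝ => (x^2 + γ^2*ν) ^ ((1:ℝ)/2)) (nhdsWithin 0 (Ioi 0))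
      (nhds (γ * ν ^ ((1:ℝ)/2))) := by
    have hcont : ContinuousAt (fun x : ℝ => (x^2 + γ^2*ν) ^ ((1:ℝ)/2)) 0 := by
      exact ContinuousAt.rpow_const (by fun_prop) (Or.inl (ne_of_gt (hd 0)))
    have hval : ((0:ℝ)^2 + γ^2*ν) ^ ((1:ℝ)/2) = γ * ν ^ ((1:ℝ)/2) := by
      rw [(by ring : (0:ℝ)^2 + γ^2*ν = γ^2 * ν), Real.mul_rpow (sq_nonneg γ) hν.le,
        hsq γ hγ.le]
    have := hcont.tendsto.mono_left (nhdsWithin_le_nhds (s := Ioi (0:ℝ)))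
    rw [hval] at this
    exact this
  have hmintendsto : Tendsto (fun x : ℝ => min 1 ((1 - z x)^c)) (nhdsWithin 0 (Ioi 0))
      (nhds 1) := by
    have h1 : Tendsto (fun x : ℝ => (1 - z x)^c) (nhdsWithin 0 (Ioi 0)) (nhds 1) := by
      have hcont : ContinuousAt (fun t : ℝ => (1 - t)^c) 0 := by
        exact ContinuousAt.rpow_const (by fun_prop) (Or.inl (by norm_num))
      have := (hcont.tendsto).comp hztendsto
      simpa [Function.comp_def] using this
    simpa using (tendsto_const_nhds (x := (1:ℝ))).min h1
  have hmaxtendsto : Tendsto (fun x : ℝ => max 1 ((1 - z x)^c)) (nhdsWithin 0 (Ioi 0))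
      (nhds 1) := by
    have h1 : Tendsto (fun x : ℝ => (1 - z x)^c) (nhdsWithin 0 (Ioi 0)) (nhds 1) := by
      have hcont : ContinuousAt (fun t : ℝ => (1 - t)^c) 0 := by
        exact ContinuousAt.rpow_const (by fun_prop) (Or.inl (by norm_num))
      have := (hcont.tendsto).comp hztendsto
      simpa [Function.comp_def] using this
    simpa using (tendsto_const_nhds (x := (1:ℝ))).max h1
  -- squeeze for G x / x
  have hGx : Tendsto (fun x => G x / x) (nhdsWithin 0 (Ioi 0)) (nhds (2 / (γ * ν ^ ((1:ℝ)/2)))) := by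
    have hlo : Tendsto (fun x : ℝ => 2 * min 1 ((1 - z x)^c) / (x^2 + γ^2*ν) ^ ((1:ℝ)/2))
        (nhdsWithin 0 (Ioi 0)) (nhds (2 / (γ * ν ^ ((1:ℝ)/2)))) := by
      have := ((tendsto_const_nhds (x := (2:ℝ))).mul hmintendsto).div hstendsto (ne_of_gt hK)
      simpa [Pi.div_def] using this
    have hhi : Tendsto (fun x : ℝ => 2 * max 1 ((1 - z x)^c) / (x^2 + γ^2*ν) ^ ((1:ℝ)/2))
        (nhdsWithin 0 (Ioi 0)) (nhds (2 / (γ * ν ^ ((1:ℝ)/2)))) := by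
      have := ((tendsto_const_nhds (x := (2:ℝ))).mul hmaxtendsto).div hstendsto (ne_of_gt hK)
      simpa [Pi.div_def] using this
    refine tendsto_of_tendsto_of_tendsto_of_le_of_le' hlo hhi ?_ ?_
    · filter_upwards [hev] with x hx
      obtain ⟨hx0, hxz⟩ := hx
      have hb := (G_bounds (c := c) (hz0 x) hxz).1
      have heq : 2 * min 1 ((1 - z x)^c) / (x^2 + γ^2*ν) ^ ((1:ℝ)/2)
          = 2 * (z x) ^ ((1:ℝ)/2) * min 1 ((1 - z x)^c) / x := by
        rw [hzsqrt x hx0]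
        field_simp
      rw [heq]
      exact div_le_div_of_nonneg_right hb hx0.le
    · filter_upwards [hev] with x hx
      obtain ⟨hx0, hxz⟩ := hx
      have hb := (G_bounds (c := c) (hz0 x) hxz).2
      have heq : 2 * max 1 ((1 - z x)^c) / (x^2 + γ^2*ν) ^ ((1:ℝ)/2)
          = 2 * (z x) ^ ((1:ℝ)/2) * max 1 ((1 - z x)^c) / x := by
        rw [hzsqrt x hx0]
        field_simp
      rw [heq]
      exact div_le_div_of_nonneg_right hb hx0.le
  -- regIncBeta is G/B
  have hreg : ∀ x : ℝ, regIncBeta (1/2) (ν/2) (x^2/(x^2+γ^2*ν)) = G x / B := fun x => rfl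
  -- I x / x limit
  have hIx : Tendsto (fun x => (G x / B) / x) (nhdsWithin 0 (Ioi 0))
      (nhds ((2 / (γ * ν ^ ((1:ℝ)/2))) / B)) := by
    have := hGx.div_const B
    refine this.congr (fun x => ?_)
    rw [div_right_comm]
  -- I x tends to 0
  have hI0 : Tendsto (fun x => G x / B) (nhdsWithin 0 (Ioi 0)) (nhds 0) := by
    have hx0 : Tendsto (fun x : ℝ => x) (nhdsWithin (0:ℝ) (Ioi 0)) (nhds 0) :=
      (continuous_id.tendsto 0).mono_left nhdsWithin_le_nhds
    have hprod := hIx.mul hx0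
    rw [mul_zero] at hprod
    refine hprod.congr' ?_
    filter_upwards [self_mem_nhdsWithin] with x hx
    have : (x:ℝ) ≠ 0 := ne_of_gt hx
    field_simp
  -- I x eventually positive
  have hIpos : ∀ᶠ x in nhdsWithin (0:ℝ) (Ioi 0), 0 < G x / B := by
    filter_upwards [hev] with x hx
    obtain ⟨hx0, hxz⟩ := hx
    have hb := (G_bounds (c := c) (hz0 x) hxz).1
    have hmin : 0 < min 1 ((1 - z x)^c) :=
      lt_min one_pos (Real.rpow_pos_of_pos (by linarith) c)
    have hzp : 0 < (z x) ^ ((1:ℝ)/2) := Real.rpow_pos_of_pos (hzpos x hx0) _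
    have hGpos : 0 < G x := lt_of_lt_of_le (by positivity) hb
    exact div_pos hGpos hB
  -- derivative of log(1+t) at 0
  have hlog : HasDerivAt (fun t : ℝ => Real.log (1 + t)) 1 0 := by
    have h1 : HasDerivAt (fun t : ℝ => 1 + t) 1 0 := by
      simpa using (hasDerivAt_id (0:ℝ)).const_add (1:ℝ)
    have h2 := (Real.hasDerivAt_log (by norm_num : (1:ℝ) + 0 ≠ 0)).comp 0 h1
    simpa [Function.comp_def] using h2
  have hslope : Tendsto (slope (fun t : ℝ => Real.log (1 + t)) 0)
      (nhdsWithin 0 {(0:ℝ)}ᶜ) (nhds 1) := hasDerivAt_iff_tendsto_slope.mp hlog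
  have hneg : Tendsto (fun x => -(G x / B)) (nhdsWithin (0:ℝ) (Ioi 0))
      (nhdsWithin 0 {(0:ℝ)}ᶜ) := by
    apply tendsto_nhdsWithin_of_tendsto_nhds_of_eventually_within
    · simpa using hI0.neg
    · filter_upwards [hIpos] with x hx
      simp only [mem_compl_iff, mem_singleton_iff, neg_eq_zero]
      exact ne_of_gt hx
  have hcomp := (hslope.comp hneg).mul hIx
  rw [one_mul] at hcomp
  have hval : ((2 / (γ * ν ^ ((1:ℝ)/2))) / B) = 2 / (γ * ν ^ ((1:ℝ)/2) * B) := div_div _ _ _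
  rw [hval] at hcomp
  refine Tendsto.congr' ?_ hcomp
  filter_upwards [hev, hIpos] with x hx hx2
  have hIne : G x / B ≠ 0 := ne_of_gt hx2
  have hxne : (x:ℝ) ≠ 0 := ne_of_gt hx.1
  rw [hreg x]
  show slope (fun t : ℝ => Real.log (1 + t)) 0 (-(G x / B)) * (G x / B / x)
    = - Real.log (1 - G x / B) / x
  rw [slope_def_field]
  rw [show (1:ℝ) + -(G x / B) = 1 - G x / B by ring]
  simp only [add_zero, Real.log_one, sub_zero]
  set I := G x / B with hI
  set l := Real.log (1 - I) with hl
  field_simp
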